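/- Let G ≤ Sym(Ω) be such that π(G) is a chain under refinement. Then there is a single prime p such that every cycle of every element of G has length a power of p. -/

import Mathlib

/-- The orbit partition of a permutation `g`, as a setoid on `Ω`. -/
def piPart {Ω : Type*} (g : Equiv.Perm Ω) : Setoid Ω :=
  MulAction.orbitRel (Subgroup.zpowers g) Ω

/-- The set of orbit partitions of elements of a permutation group `G`. -/
def piSet {Ω : Type*} (G : Subgroup (Equiv.Perm Ω)) : Set (Setoid Ω) :=
  {P | ∃ g ∈ G, piPart g = P}

/-- `G` is join-coherent if its set of orbit partitions is closed under joins. -/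
def JoinCoherent {Ω : Type*} (G : Subgroup (Equiv.Perm Ω)) : Prop :=
  ∀ P ∈ piSet G, ∀ Q ∈ piSet G, P ⊔ Q ∈ piSet G

/-- `G` is meet-coherent if its set of orbit partitions is closed under meets. -/
def MeetCoherent {Ω : Type*} (G : Subgroup (Equiv.Perm Ω)) : Prop :=
  ∀ P ∈ piSet G, ∀ Q ∈ piSet G, P ⊓ Q ∈ piSet G

namespace ChainCyclePf

open Equiv Equiv.Perm Function

variable {Ω : Type*}

/-- The cycle of `g` through `x`. -/
def C (g : Equiv.Perm Ω) (x : Ω) : Set Ω := {y | g.SameCycle x y}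

lemma mem_C {g : Equiv.Perm Ω} {x y : Ω} : y ∈ C g x ↔ g.SameCycle x y := Iff.rfl

lemma self_mem_C (g : Equiv.Perm Ω) (x : Ω) : x ∈ C g x := ⟨0, rfl⟩

lemma C_eq_of_mem {g : Equiv.Perm Ω} {x w : Ω} (hw : w ∈ C g x) : C g w = C g x := by
  ext v
  exact ⟨fun h => hw.trans h, fun h => hw.symm.trans h⟩

lemma piPart_rel_iff {g : Equiv.Perm Ω} {x y : Ω} : (piPart g) y x ↔ g.SameCycle x y := by
  show (MulAction.orbitRel (Subgroup.zpowers g) Ω) y x ↔ _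
  rw [MulAction.orbitRel_apply, MulAction.mem_orbit_iff]
  constructor
  · rintro ⟨u, hu⟩
    obtain ⟨k, hk⟩ := Subgroup.mem_zpowers_iff.mp u.2
    refine ⟨k, ?_⟩
    rw [hk]
    exact hu
  · rintro ⟨k, hk⟩
    exact ⟨⟨g ^ k, Subgroup.mem_zpowers_iff.mpr ⟨k, rfl⟩⟩, hk⟩

lemma subset_of_le {a b : Equiv.Perm Ω} (h : piPart a ≤ piPart b) (x : Ω) :
    C a x ⊆ C b x := fun _ hy =>
  piPart_rel_iff.mp (Setoid.le_def.mp h (piPart_rel_iff.mpr hy))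

lemma zpow_apply_emod {g : Equiv.Perm Ω} {x : Ω} {d : ℕ} (hd : (g ^ d) x = x) (k : ℤ) :
    (g ^ k) x = (g ^ (k % (d : ℤ))) x := by
  have hdz : (g ^ (d : ℤ)) x = x := by rwa [zpow_natCast]
  have hstep : ∀ m : ℤ, (g ^ (m + d)) x = (g ^ m) x := fun m => by
    rw [zpow_add, Equiv.Perm.mul_apply, hdz]
  have hstep' : ∀ m : ℤ, (g ^ (m - d)) x = (g ^ m) x := fun m => by
    have h := hstep (m - d)
    rw [sub_add_cancel] at h
    exact h.symm
  have hj : ∀ j : ℤ, (g ^ (k % (d:ℤ) + d * j)) x = (g ^ (k % (d:ℤ))) x := by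
    intro j
    induction j using Int.induction_on with
    | zero => simp
    | succ i ih =>
        rw [show k % (d:ℤ) + d * ((i:ℤ)+1) = (k % (d:ℤ) + d * i) + d by ring, hstep, ih]
    | pred i ih =>
        rw [show k % (d:ℤ) + d * (-(i:ℤ)-1) = (k % (d:ℤ) + d * (-(i:ℤ))) - d by ring, hstep', ih]
  have h2 := hj (k / d)
  rwa [Int.emod_add_mul_ediv] at h2

lemma zpow_cancel {g : Equiv.Perm Ω} {x : Ω} {s t : ℤ} (h : (g ^ s) x = (g ^ t) x) :
    (g ^ (s - t)) x = x := by
  apply (g ^ t).injective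
  rw [← Equiv.Perm.mul_apply, ← zpow_add, show t + (s - t) = s by ring, h]

lemma C_finite_of_fix {g : Equiv.Perm Ω} {x : Ω} {d : ℕ} (hd0 : 0 < d) (hd : (g ^ d) x = x) :
    (C g x).Finite := by
  apply Set.Finite.subset (Set.finite_range (fun i : Fin d => (g ^ (i : ℕ)) x))
  rintro y ⟨k, rfl⟩
  have h1 : 0 ≤ k % (d:ℤ) := Int.emod_nonneg k (by exact_mod_cast hd0.ne')
  have h2 : k % (d:ℤ) < d := Int.emod_lt_of_pos k (by exact_mod_cast hd0)
  refine ⟨⟨(k % (d:ℤ)).toNat, by omega⟩, ?_⟩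
  show (g ^ (((k % (d:ℤ)).toNat : ℕ))) x = (g ^ k) x
  rw [zpow_apply_emod hd k, ← zpow_natCast, Int.toNat_of_nonneg h1]

lemma mem_periodicPts_of_finite {g : Equiv.Perm Ω} {x : Ω} (hfin : (C g x).Finite) :
    x ∈ periodicPts ⇑g := by
  by_contra hnp
  have hinj : Function.Injective (fun i : ℕ => (g ^ i) x) := by
    intro i j hij
    by_contra hne
    wlog hlt : i < j generalizing i j
    · exact this hij.symm (Ne.symm hne) (by omega)
    have h3 : (g ^ i) ((g ^ (j - i)) x) = (g ^ i) x := by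
      rw [← Equiv.Perm.mul_apply, ← pow_add, Nat.add_sub_cancel' hlt.le]
      exact hij.symm
    have h4 : (g ^ (j - i)) x = x := (g ^ i).injective h3
    have h5 : IsPeriodicPt (⇑g) (j - i) x := by
      show (⇑g)^[j-i] x = x
      rw [← Equiv.Perm.coe_pow]
      exact h4
    exact hnp (mk_mem_periodicPts (by omega) h5)
  refine absurd (Set.infinite_of_injective_forall_mem (s := C g x) hinj ?_) hfin.not_infinite
  intro i
  exact ⟨(i : ℤ), by rw [zpow_natCast]⟩

lemma ncard_C {g : Equiv.Perm Ω} {x : Ω} (hfin : (C g x).Finite) :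
    (C g x).ncard = minimalPeriod (⇑g) x := by
  have hmem := mem_periodicPts_of_finite hfin
  have hpos : 0 < minimalPeriod (⇑g) x := minimalPeriod_pos_of_mem_periodicPts hmem
  set n := minimalPeriod (⇑g) x with hn
  have hfix : (g ^ n) x = x := by
    have h := iterate_minimalPeriod (f := ⇑g) (x := x)
    rw [← hn, ← Equiv.Perm.coe_pow] at h
    exact h
  have hEq : C g x = (fun i : ℕ => (g ^ i) x) '' Set.Iio n := by
    ext y
    constructor
    · rintro ⟨k, rfl⟩
      have h1 : 0 ≤ k % (n:ℤ) := Int.emod_nonneg k (by exact_mod_cast hpos.ne')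
      have h2 : k % (n:ℤ) < n := Int.emod_lt_of_pos k (by exact_mod_cast hpos)
      refine ⟨(k % (n:ℤ)).toNat, Set.mem_Iio.mpr (by omega), ?_⟩
      show (g ^ ((k % (n:ℤ)).toNat)) x = (g ^ k) x
      rw [zpow_apply_emod hfix k, ← zpow_natCast, Int.toNat_of_nonneg h1]
    · rintro ⟨i, _, rfl⟩
      exact ⟨(i : ℤ), by rw [zpow_natCast]⟩
  have hinj : (Set.Iio n).InjOn (fun i : ℕ => (g ^ i) x) := by
    have h := iterate_injOn_Iio_minimalPeriod (f := ⇑g) (x := x)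
    rw [← hn] at h
    intro i hi j hj hij
    exact h hi hj hij
  rw [hEq, Set.ncard_image_of_injOn hinj,
    show Set.Iio n = ↑(Finset.range n) from (Finset.coe_range n).symm,
    Set.ncard_coe_finset, Finset.card_range]

lemma ncard_C_pos {g : Equiv.Perm Ω} {x : Ω} (hfin : (C g x).Finite) : 0 < (C g x).ncard :=
  (Set.ncard_pos hfin).mpr ⟨x, self_mem_C g x⟩

lemma C_pow_subset (g : Equiv.Perm Ω) (x : Ω) (k : ℕ) : C (g ^ k) x ⊆ C g x :=
  fun _ hy => hy.of_pow

lemma ncard_C_pow {g : Equiv.Perm Ω} {x : Ω} (hfin : (C g x).Finite) {k : ℕ} (hk : k ≠ 0) :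
    (C (g ^ k) x).ncard = (C g x).ncard / Nat.gcd ((C g x).ncard) k := by
  have h1 : (C (g ^ k) x).Finite := hfin.subset (C_pow_subset g x k)
  rw [ncard_C h1, ncard_C hfin]
  have h2 : ⇑(g ^ k) = (⇑g)^[k] := Equiv.Perm.coe_pow g k
  rw [h2, minimalPeriod_iterate_eq_div_gcd hk]

lemma image_mul (σ τ : Equiv.Perm Ω) (s : Set Ω) : ⇑σ '' (⇑τ '' s) = ⇑(σ * τ) '' s := by
  rw [← Set.image_comp]
  rfl

section Group

variable {G : Subgroup (Equiv.Perm Ω)}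

lemma comp_of_chain (hchain : IsChain (· ≤ ·) (piSet G)) {a b : Equiv.Perm Ω}
    (ha : a ∈ G) (hb : b ∈ G) : piPart a ≤ piPart b ∨ piPart b ≤ piPart a := by
  rcases eq_or_ne (piPart a) (piPart b) with h | h
  · exact Or.inl (le_of_eq h)
  · exact hchain ⟨a, ha, rfl⟩ ⟨b, hb, rfl⟩ h

lemma C_finite (hchain : IsChain (· ≤ ·) (piSet G)) {g : Equiv.Perm Ω} (hg : g ∈ G) (x : Ω) :
    (C g x).Finite := by
  by_contra hinf
  have hfree : ∀ m : ℤ, (g ^ m) x = x → m = 0 := by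
    intro m hm
    by_contra hm0
    have hneg : (g ^ (-m)) x = x := by
      have h1 : (g ^ (-m)) ((g ^ m) x) = (g ^ (-m)) x := by rw [hm]
      rw [← Equiv.Perm.mul_apply, ← zpow_add, neg_add_cancel, zpow_zero] at h1
      have : (1 : Equiv.Perm Ω) x = x := rfl
      rw [this] at h1
      exact h1.symm
    have hd : (g ^ m.natAbs) x = x := by
      rcases Int.natAbs_eq m with h | h
      · rw [← zpow_natCast, ← h]; exact hm
      · rw [← zpow_natCast, show ((m.natAbs : ℤ)) = -m by omega]; exact hneg
    exact hinf (C_finite_of_fix (Int.natAbs_pos.mpr hm0) hd)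
  have h2 : g ^ (2:ℕ) ∈ G := pow_mem hg 2
  have h3 : g ^ (3:ℕ) ∈ G := pow_mem hg 3
  have conv2 : ∀ k : ℤ, ((g ^ (2:ℕ)) ^ k) x = (g ^ (2 * k)) x := by
    intro k
    rw [← zpow_natCast g 2, ← zpow_mul]
    norm_num
  have conv3 : ∀ k : ℤ, ((g ^ (3:ℕ)) ^ k) x = (g ^ (3 * k)) x := by
    intro k
    rw [← zpow_natCast g 3, ← zpow_mul]
    norm_num
  rcases comp_of_chain hchain h2 h3 with h | h
  · have hy : (g ^ (2:ℕ)) x ∈ C (g ^ (2:ℕ)) x := ⟨1, by rw [zpow_one]⟩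
    obtain ⟨k, hk⟩ := subset_of_le h x hy
    rw [conv3 k] at hk
    have hk2 : (g ^ (3 * k)) x = (g ^ (2:ℤ)) x := by
      rw [hk, ← zpow_natCast g 2]
      norm_num
    have := hfree _ (zpow_cancel hk2)
    omega
  · have hy : (g ^ (3:ℕ)) x ∈ C (g ^ (3:ℕ)) x := ⟨1, by rw [zpow_one]⟩
    obtain ⟨k, hk⟩ := subset_of_le h x hy
    rw [conv2 k] at hk
    have hk2 : (g ^ (2 * k)) x = (g ^ (3:ℤ)) x := by
      rw [hk, ← zpow_natCast g 3]
      norm_num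
    have := hfree _ (zpow_cancel hk2)
    omega

end Group

lemma rig_core {a c b : Equiv.Perm Ω} {O : Set Ω} (hO : O.Finite)
    (hbO : ⇑b '' O = O)
    (hconj : ∀ v w : Ω, c.SameCycle (b v) (b w) ↔ a.SameCycle v w)
    (hle : ∀ v w : Ω, a.SameCycle v w → c.SameCycle v w) :
    ∀ v ∈ O, ∀ w ∈ O, c.SameCycle v w → a.SameCycle v w := by
  classical
  set T := hO.toFinset with hT
  have hmemT : ∀ v, v ∈ T ↔ v ∈ O := fun v => hO.mem_toFinset
  set fa : Ω → Finset Ω := fun w => T.filter (fun v => a.SameCycle w v) with hfa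
  set fc : Ω → Finset Ω := fun w => T.filter (fun v => c.SameCycle w v) with hfc
  have hTb : T.image ⇑b = T := by
    apply Finset.coe_injective
    rw [Finset.coe_image, hO.coe_toFinset, hbO]
  have hbmem : ∀ v ∈ O, b v ∈ O := fun v hv => hbO ▸ ⟨v, hv, rfl⟩
  have hbinv : ∀ u ∈ O, b⁻¹ u ∈ O := by
    intro u hu
    rw [← hbO] at hu
    obtain ⟨v, hv, rfl⟩ := hu
    simpa using hv
  have hfa_eq : ∀ v ∈ O, ∀ w ∈ O, (fa v = fa w ↔ a.SameCycle v w) := by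
    intro v hv w hw
    constructor
    · intro h
      have hmem : w ∈ fa v := by
        rw [h]
        exact Finset.mem_filter.mpr ⟨(hmemT w).mpr hw, SameCycle.refl a w⟩
      exact (Finset.mem_filter.mp hmem).2
    · intro h
      ext u
      simp only [hfa, Finset.mem_filter]
      exact and_congr_right fun _ => ⟨fun hu => h.symm.trans hu, fun hu => h.trans hu⟩
  have hfc_eq : ∀ v ∈ O, ∀ w ∈ O, (c.SameCycle v w → fc v = fc w) := by
    intro v _ w _ h
    ext u
    simp only [hfc, Finset.mem_filter]
    exact and_congr_right fun _ => ⟨fun hu => h.symm.trans hu, fun hu => h.trans hu⟩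
  have hconj_cls : ∀ w ∈ O, fc (b w) = (fa w).image ⇑b := by
    intro w hw
    ext u
    simp only [hfc, hfa, Finset.mem_filter, Finset.mem_image]
    constructor
    · rintro ⟨huT, hcyc⟩
      refine ⟨b⁻¹ u, ⟨?_, ?_⟩, by simp⟩
      · exact (hmemT _).mpr (hbinv u ((hmemT u).mp huT))
      · have h5 := (hconj w (b⁻¹ u)).mp (by simpa using hcyc)
        exact h5
    · rintro ⟨v, ⟨hvT, hvc⟩, rfl⟩
      exact ⟨(hmemT _).mpr (hbmem v ((hmemT v).mp hvT)), (hconj w v).mpr hvc⟩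
  set ρ : Finset Ω → Finset Ω := fun s => T.filter (fun v => ∃ u ∈ s, c.SameCycle u v) with hρ
  have hρ_eq : ∀ w ∈ O, ρ (fa w) = fc w := by
    intro w hw
    ext u
    simp only [hρ, hfa, hfc, Finset.mem_filter]
    constructor
    · rintro ⟨huT, v, ⟨hvT, hav⟩, hcv⟩
      exact ⟨huT, (hle w v hav).trans hcv⟩
    · rintro ⟨huT, hcu⟩
      exact ⟨huT, w, ⟨(hmemT w).mpr hw, SameCycle.refl a w⟩, hcu⟩
  set A := T.image fa with hA
  set Cc := T.image fc with hCc
  have h1 : Cc = A.image ρ := by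
    rw [hA, Finset.image_image]
    apply Finset.image_congr
    intro w hw
    exact (hρ_eq w ((hmemT w).mp hw)).symm
  have h2 : Cc = A.image (fun s => s.image ⇑b) := by
    rw [hA, Finset.image_image]
    conv_lhs => rw [hCc, ← hTb, Finset.image_image]
    apply Finset.image_congr
    intro w hw
    exact hconj_cls w ((hmemT w).mp hw)
  have hcard : (A.image ρ).card = A.card := by
    rw [← h1, h2]
    exact Finset.card_image_of_injective A (Finset.image_injective b.injective)
  have hinj := Finset.injOn_of_card_image_eq hcard
  intro v hv w hw hcvw
  have hfcc : fc v = fc w := hfc_eq v hv w hw hcvw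
  have hA1 : fa v ∈ A := Finset.mem_image_of_mem fa ((hmemT v).mpr hv)
  have hA2 : fa w ∈ A := Finset.mem_image_of_mem fa ((hmemT w).mpr hw)
  have hρρ : ρ (fa v) = ρ (fa w) := by rw [hρ_eq v hv, hρ_eq w hw, hfcc]
  exact (hfa_eq v hv w hw).mp (hinj hA1 hA2 hρρ)

section Group2

variable {G : Subgroup (Equiv.Perm Ω)}

lemma key_eq (hchain : IsChain (· ≤ ·) (piSet G)) {a b : Equiv.Perm Ω} (ha : a ∈ G) (hb : b ∈ G)
    (hle : piPart a ≤ piPart b) {x : Ω} (hfin : (C b x).Finite) :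
    ∀ w ∈ C b x, C a (b w) = ⇑b '' C a w := by
  set O := C b x with hO
  have hsubO : ∀ w ∈ O, C a w ⊆ O := by
    intro w hw
    rw [hO, ← C_eq_of_mem hw]
    exact subset_of_le hle w
  set c := b * a * b⁻¹ with hc
  have hcG : c ∈ G := mul_mem (mul_mem hb ha) (inv_mem hb)
  have hconj : ∀ v w : Ω, c.SameCycle (b v) (b w) ↔ a.SameCycle v w := by
    intro v w
    rw [hc, Equiv.Perm.sameCycle_conj]
    simp
  have hbO : ⇑b '' O = O := by
    ext u
    constructor
    · rintro ⟨v, hv, rfl⟩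
      exact hv.apply_right
    · intro hu
      exact ⟨b⁻¹ u, hu.symm_apply_right, by simp⟩
  have hcsubO : ∀ v ∈ O, ∀ u, c.SameCycle v u → u ∈ O := by
    intro v hv u hcu
    have h1 : a.SameCycle (b⁻¹ v) (b⁻¹ u) := by
      rw [← hconj]
      simpa using hcu
    have hbv : b⁻¹ v ∈ O := hv.symm_apply_right
    have h2 : b⁻¹ u ∈ O := hsubO _ hbv h1
    have h3 : b (b⁻¹ u) ∈ O := by
      rw [← hbO]
      exact ⟨b⁻¹ u, h2, rfl⟩
    simpa using h3
  have hiff : ∀ v ∈ O, ∀ w ∈ O, (a.SameCycle v w ↔ c.SameCycle v w) := by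
    rcases comp_of_chain hchain ha hcG with h | h
    · have hle' : ∀ v w : Ω, a.SameCycle v w → c.SameCycle v w := fun v w hvw =>
        piPart_rel_iff.mp (Setoid.le_def.mp h (piPart_rel_iff.mpr hvw))
      have hrig := rig_core hfin hbO hconj hle'
      exact fun v hv w hw => ⟨fun h' => hle' v w h', fun h' => hrig v hv w hw h'⟩
    · have hle'' : ∀ v w : Ω, c.SameCycle v w → a.SameCycle v w := fun v w hvw =>
        piPart_rel_iff.mp (Setoid.le_def.mp h (piPart_rel_iff.mpr hvw))
      have hconj' : ∀ v w : Ω, a.SameCycle (b⁻¹ v) (b⁻¹ w) ↔ c.SameCycle v w := by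
        intro v w
        have := hconj (b⁻¹ v) (b⁻¹ w)
        simp only [Equiv.Perm.coe_inv, Equiv.apply_symm_apply] at this
        exact this.symm
      have hbO' : ⇑b⁻¹ '' O = O := by
        conv_lhs => rw [← hbO]
        rw [image_mul]
        simp
      have hrig := rig_core hfin hbO' hconj' hle''
      exact fun v hv w hw => ⟨fun h' => hrig v hv w hw h', fun h' => hle'' v w h'⟩
  intro w hw
  have hbw : b w ∈ O := by
    rw [← hbO]
    exact ⟨w, hw, rfl⟩
  ext u
  constructor
  · intro hu
    have huO : u ∈ O := hsubO _ hbw hu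
    have hcu : c.SameCycle (b w) u := (hiff _ hbw _ huO).mp hu
    refine ⟨b⁻¹ u, ?_, by simp⟩
    rw [mem_C, ← hconj w (b⁻¹ u)]
    simpa using hcu
  · rintro ⟨v, hv, rfl⟩
    have hvO : v ∈ O := hsubO _ hw hv
    have hcv : c.SameCycle (b w) (b v) := (hconj w v).mpr hv
    have hbvO : b v ∈ O := by
      rw [← hbO]
      exact ⟨v, hvO, rfl⟩
    exact (hiff _ hbw _ hbvO).mpr hcv

lemma card_dvd (hchain : IsChain (· ≤ ·) (piSet G)) {a b : Equiv.Perm Ω} (ha : a ∈ G)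
    (hb : b ∈ G) (hle : piPart a ≤ piPart b) (x : Ω) (hfin : (C b x).Finite) :
    (C a x).ncard ∣ (C b x).ncard := by
  classical
  have key := key_eq hchain ha hb hle hfin
  set O := C b x with hO
  have hsubO : ∀ w ∈ O, C a w ⊆ O := by
    intro w hw
    rw [hO, ← C_eq_of_mem hw]
    exact subset_of_le hle w
  have key' : ∀ w ∈ O, C a (b⁻¹ w) = ⇑b⁻¹ '' C a w := by
    intro w hw
    have h1 : b⁻¹ w ∈ O := hw.symm_apply_right
    have h2 := key _ h1
    rw [show b (b⁻¹ w) = w by simp] at h2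
    rw [h2, image_mul]
    simp
  have horb : ∀ j : ℤ, C a ((b ^ j) x) = ⇑(b ^ j) '' C a x := by
    intro j
    induction j using Int.induction_on with
    | zero => simp
    | succ i ih =>
        have hmem : (b ^ (i:ℤ)) x ∈ O := ⟨(i:ℤ), rfl⟩
        have h1 : (b ^ ((i:ℤ)+1)) x = b ((b ^ (i:ℤ)) x) := by
          rw [show (i:ℤ)+1 = 1+(i:ℤ) by ring, zpow_add, zpow_one, Equiv.Perm.mul_apply]
        rw [h1, key _ hmem, ih, image_mul,
          show b * b ^ (i:ℤ) = b ^ ((i:ℤ)+1) by rw [← zpow_one_add]; congr 1; ring]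
    | pred i ih =>
        have hmem : (b ^ (-(i:ℤ))) x ∈ O := ⟨-(i:ℤ), rfl⟩
        have h1 : (b ^ (-(i:ℤ)-1)) x = b⁻¹ ((b ^ (-(i:ℤ))) x) := by
          rw [show -(i:ℤ)-1 = -1+(-(i:ℤ)) by ring, zpow_add, Equiv.Perm.mul_apply, zpow_neg_one]
        rw [h1, key' _ hmem, ih, image_mul,
          show b⁻¹ * b ^ (-(i:ℤ)) = b ^ (-(i:ℤ)-1) by
            rw [← zpow_neg_one, ← zpow_add]; congr 1; ring]
  have hcard : ∀ w ∈ O, (C a w).ncard = (C a x).ncard := by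
    rintro w ⟨j, rfl⟩
    rw [horb j, Set.ncard_image_of_injective _ (b ^ j).injective]
  set T := hfin.toFinset with hT
  have hmemT : ∀ v, v ∈ T ↔ v ∈ O := fun v => hfin.mem_toFinset
  set fa : Ω → Finset Ω := fun w => T.filter (fun v => a.SameCycle w v) with hfa
  have hfa_mem : ∀ w ∈ O, ∀ v, (v ∈ fa w ↔ v ∈ C a w) := by
    intro w hw v
    simp only [hfa, Finset.mem_filter]
    constructor
    · rintro ⟨_, h⟩
      exact h
    · intro h
      exact ⟨(hmemT v).mpr (hsubO w hw h), h⟩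
  have hfa_card : ∀ w ∈ O, (fa w).card = (C a x).ncard := by
    intro w hw
    rw [← hcard w hw, ← Set.ncard_coe_finset (fa w)]
    congr 1
    ext v
    rw [Finset.mem_coe, hfa_mem w hw v]
  have hmap : ∀ v ∈ T, fa v ∈ T.image fa := fun v hv => Finset.mem_image_of_mem fa hv
  have hsum := Finset.card_eq_sum_card_fiberwise hmap
  have hfib : ∀ w ∈ T, T.filter (fun v => fa v = fa w) = fa w := by
    intro w hw
    ext v
    simp only [Finset.mem_filter]
    constructor
    · rintro ⟨hvT, heq⟩
      have hv1 : v ∈ fa v := Finset.mem_filter.mpr ⟨hvT, SameCycle.refl a v⟩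
      rw [heq] at hv1
      exact hv1
    · intro hvfa
      obtain ⟨hvT, hsc⟩ := Finset.mem_filter.mp hvfa
      refine ⟨hvT, ?_⟩
      ext u
      simp only [hfa, Finset.mem_filter]
      exact and_congr_right fun _ => ⟨fun h => hsc.trans h, fun h => hsc.symm.trans h⟩
  have hconst : ∀ s ∈ T.image fa, (T.filter (fun v => fa v = s)).card = (C a x).ncard := by
    intro s hs
    obtain ⟨w, hwT, rfl⟩ := Finset.mem_image.mp hs
    rw [hfib w hwT, hfa_card w ((hmemT w).mp hwT)]
  rw [Finset.sum_congr rfl hconst, Finset.sum_const, smul_eq_mul] at hsum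
  have hTcard : T.card = O.ncard := by
    rw [hT, ← Set.ncard_coe_finset, hfin.coe_toFinset]
  rw [hTcard] at hsum
  exact Dvd.intro_left _ hsum.symm

end Group2

lemma div_gcd_dvd_prime {r L k : ℕ} (hr : r.Prime) (hrL : r ∣ L) (hkL : k ∣ L) (hk0 : k ≠ 0) :
    k / Nat.gcd k (L / r) ∣ r := by
  have h1 : k ∣ r * Nat.gcd k (L / r) := by
    have h2 : r * Nat.gcd k (L / r) = Nat.gcd (r * k) L := by
      rw [← Nat.gcd_mul_left, Nat.mul_div_cancel' hrL]
    rw [h2]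
    exact Nat.dvd_gcd (dvd_mul_left k r) hkL
  have hg : Nat.gcd k (L / r) ∣ k := Nat.gcd_dvd_left _ _
  have hgpos : 0 < Nat.gcd k (L / r) := Nat.gcd_pos_of_pos_left _ (Nat.pos_of_ne_zero hk0)
  obtain ⟨t, ht⟩ := h1
  refine ⟨t, ?_⟩
  apply Nat.eq_of_mul_eq_mul_right hgpos
  calc r * Nat.gcd k (L / r) = k * t := ht
    _ = (k / Nat.gcd k (L / r) * Nat.gcd k (L / r)) * t := by rw [Nat.div_mul_cancel hg]
    _ = (k / Nat.gcd k (L / r) * t) * Nat.gcd k (L / r) := by ring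

lemma eq_gcd_of_div_eq_one {k m : ℕ} (hk0 : k ≠ 0) (h : k / Nat.gcd k m = 1) : k ∣ m := by
  have hg : Nat.gcd k m ∣ k := Nat.gcd_dvd_left _ _
  have h2 : k / Nat.gcd k m * Nat.gcd k m = k := Nat.div_mul_cancel hg
  rw [h, one_mul] at h2
  rw [← h2]
  exact Nat.gcd_dvd_right _ _

lemma eq_pow_of_unique_prime {p : ℕ} (hp : p.Prime) :
    ∀ n : ℕ, n ≠ 0 → (∀ r : ℕ, r.Prime → r ∣ n → r = p) → ∃ e, n = p ^ e := by
  intro n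
  induction n using Nat.strong_induction_on with
  | _ n ih =>
    intro hn0 hall
    rcases eq_or_ne n 1 with rfl | hn1
    · exact ⟨0, rfl⟩
    · obtain ⟨r, hr, hrd⟩ := Nat.exists_prime_and_dvd hn1
      have hrp := hall r hr hrd
      obtain ⟨t, ht⟩ := hrd
      have ht0 : t ≠ 0 := by
        rintro rfl
        rw [mul_zero] at ht
        exact hn0 ht
      have htlt : t < n := by
        have h1 := Nat.pos_of_ne_zero ht0
        have h2 := hr.one_lt
        calc t < r * t := by nlinarith
          _ = n := ht.symm
      obtain ⟨e, he⟩ := ih t htlt ht0 (fun s hs hsd => hall s hs (hsd.trans ⟨r, by rw [ht]; ring⟩))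
      exact ⟨e + 1, by rw [ht, he, hrp, pow_succ]; ring⟩

section Group3

variable {G : Subgroup (Equiv.Perm Ω)}

lemma prime_eq_of_same (hchain : IsChain (· ≤ ·) (piSet G)) {g : Equiv.Perm Ω} (hg : g ∈ G)
    {x y : Ω} {p q : ℕ} (hp : p.Prime) (hq : q.Prime)
    (hpd : p ∣ (C g x).ncard) (hqd : q ∣ (C g y).ncard) : p = q := by
  have hfinx : (C g x).Finite := C_finite hchain hg x
  have hfiny : (C g y).Finite := C_finite hchain hg y
  set n := (C g x).ncard with hn
  set m := (C g y).ncard with hm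
  have hn0 : 0 < n := ncard_C_pos hfinx
  have hm0 : 0 < m := ncard_C_pos hfiny
  set L := Nat.lcm n m with hL
  have hL0 : 0 < L := Nat.lcm_pos hn0 hm0
  have hnL : n ∣ L := Nat.dvd_lcm_left n m
  have hmL : m ∣ L := Nat.dvd_lcm_right n m
  have hpL : p ∣ L := hpd.trans hnL
  have hqL : q ∣ L := hqd.trans hmL
  have hLp0 : L / p ≠ 0 := (Nat.div_pos (Nat.le_of_dvd hL0 hpL) hp.pos).ne'
  have hLq0 : L / q ≠ 0 := (Nat.div_pos (Nat.le_of_dvd hL0 hqL) hq.pos).ne'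
  set a := g ^ (L / p) with ha
  set b := g ^ (L / q) with hb
  have haG : a ∈ G := pow_mem hg _
  have hbG : b ∈ G := pow_mem hg _
  have hax : (C a x).ncard = n / Nat.gcd n (L / p) := ncard_C_pow hfinx hLp0
  have hay : (C a y).ncard = m / Nat.gcd m (L / p) := ncard_C_pow hfiny hLp0
  have hbx : (C b x).ncard = n / Nat.gcd n (L / q) := ncard_C_pow hfinx hLq0
  have hby : (C b y).ncard = m / Nat.gcd m (L / q) := ncard_C_pow hfiny hLq0
  have haxd : (C a x).ncard ∣ p := hax ▸ div_gcd_dvd_prime hp hpL hnL hn0.ne'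
  have hayd : (C a y).ncard ∣ p := hay ▸ div_gcd_dvd_prime hp hpL hmL hm0.ne'
  have hbxd : (C b x).ncard ∣ q := hbx ▸ div_gcd_dvd_prime hq hqL hnL hn0.ne'
  have hbyd : (C b y).ncard ∣ q := hby ▸ div_gcd_dvd_prime hq hqL hmL hm0.ne'
  have hanot : (C a x).ncard = p ∨ (C a y).ncard = p := by
    by_contra hcon
    push_neg at hcon
    have e1 : (C a x).ncard = 1 := (hp.eq_one_or_self_of_dvd _ haxd).resolve_right hcon.1
    have e2 : (C a y).ncard = 1 := (hp.eq_one_or_self_of_dvd _ hayd).resolve_right hcon.2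
    have d1 : n ∣ L / p := eq_gcd_of_div_eq_one hn0.ne' (hax ▸ e1)
    have d2 : m ∣ L / p := eq_gcd_of_div_eq_one hm0.ne' (hay ▸ e2)
    have d3 : L ∣ L / p := Nat.lcm_dvd d1 d2
    have d4 : L / p < L := Nat.div_lt_self hL0 hp.one_lt
    have d5 : 0 < L / p := Nat.pos_of_ne_zero hLp0
    have := Nat.le_of_dvd d5 d3
    omega
  have hbnot : (C b x).ncard = q ∨ (C b y).ncard = q := by
    by_contra hcon
    push_neg at hcon
    have e1 : (C b x).ncard = 1 := (hq.eq_one_or_self_of_dvd _ hbxd).resolve_right hcon.1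
    have e2 : (C b y).ncard = 1 := (hq.eq_one_or_self_of_dvd _ hbyd).resolve_right hcon.2
    have d1 : n ∣ L / q := eq_gcd_of_div_eq_one hn0.ne' (hbx ▸ e1)
    have d2 : m ∣ L / q := eq_gcd_of_div_eq_one hm0.ne' (hby ▸ e2)
    have d3 : L ∣ L / q := Nat.lcm_dvd d1 d2
    have d4 : L / q < L := Nat.div_lt_self hL0 hq.one_lt
    have d5 : 0 < L / q := Nat.pos_of_ne_zero hLq0
    have := Nat.le_of_dvd d5 d3
    omega
  rcases comp_of_chain hchain haG hbG with h | h
  · rcases hanot with hw | hw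
    · have hd := card_dvd hchain haG hbG h x (C_finite hchain hbG x)
      rw [hw] at hd
      exact (Nat.prime_dvd_prime_iff_eq hp hq).mp (hd.trans hbxd)
    · have hd := card_dvd hchain haG hbG h y (C_finite hchain hbG y)
      rw [hw] at hd
      exact (Nat.prime_dvd_prime_iff_eq hp hq).mp (hd.trans hbyd)
  · rcases hbnot with hw | hw
    · have hd := card_dvd hchain hbG haG h x (C_finite hchain haG x)
      rw [hw] at hd
      exact ((Nat.prime_dvd_prime_iff_eq hq hp).mp (hd.trans haxd)).symm
    · have hd := card_dvd hchain hbG haG h y (C_finite hchain haG y)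
      rw [hw] at hd
      exact ((Nat.prime_dvd_prime_iff_eq hq hp).mp (hd.trans hayd)).symm

lemma all_pow_of_dvd (hchain : IsChain (· ≤ ·) (piSet G)) {g : Equiv.Perm Ω} (hg : g ∈ G)
    {x : Ω} {p : ℕ} (hp : p.Prime) (hpd : p ∣ (C g x).ncard) :
    ∀ z : Ω, ∃ e, (C g z).ncard = p ^ e := by
  intro z
  apply eq_pow_of_unique_prime hp _ (ncard_C_pos (C_finite hchain hg z)).ne'
  intro r hr hrd
  exact prime_eq_of_same hchain hg hr hp hrd hpd

lemma prime_unique (hchain : IsChain (· ≤ ·) (piSet G)) {g h : Equiv.Perm Ω}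
    (hg : g ∈ G) (hh : h ∈ G) {x y : Ω} {p q : ℕ} (hp : p.Prime) (hq : q.Prime)
    (hpd : p ∣ (C g x).ncard) (hqd : q ∣ (C h y).ncard) : p = q := by
  have hgall := all_pow_of_dvd hchain hg hp hpd
  have hhall := all_pow_of_dvd hchain hh hq hqd
  obtain ⟨e, he⟩ := hgall x
  have he0 : e ≠ 0 := by
    rintro rfl
    rw [pow_zero] at he
    rw [he] at hpd
    have := Nat.le_of_dvd one_pos hpd
    have := hp.one_lt
    omega
  obtain ⟨f, hf⟩ := hhall y
  have hf0 : f ≠ 0 := by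
    rintro rfl
    rw [pow_zero] at hf
    rw [hf] at hqd
    have := Nat.le_of_dvd one_pos hqd
    have := hq.one_lt
    omega
  set a := g ^ (p ^ (e - 1)) with ha
  set b := h ^ (q ^ (f - 1)) with hb
  have haG : a ∈ G := pow_mem hg _
  have hbG : b ∈ G := pow_mem hh _
  have hpe : p ^ (e - 1) ≠ 0 := (pow_pos hp.pos _).ne'
  have hqf : q ^ (f - 1) ≠ 0 := (pow_pos hq.pos _).ne'
  have hax : (C a x).ncard = p := by
    rw [ha, ncard_C_pow (C_finite hchain hg x) hpe, he]
    have hdvd : p ^ (e - 1) ∣ p ^ e := pow_dvd_pow p (by omega)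
    rw [Nat.gcd_comm, Nat.gcd_eq_left hdvd, Nat.pow_div (by omega) hp.pos,
      show e - (e - 1) = 1 by omega, pow_one]
  have hby : (C b y).ncard = q := by
    rw [hb, ncard_C_pow (C_finite hchain hh y) hqf, hf]
    have hdvd : q ^ (f - 1) ∣ q ^ f := pow_dvd_pow q (by omega)
    rw [Nat.gcd_comm, Nat.gcd_eq_left hdvd, Nat.pow_div (by omega) hq.pos,
      show f - (f - 1) = 1 by omega, pow_one]
  have haz : ∀ z, ∃ d, (C a z).ncard = p ^ d := by
    intro z
    obtain ⟨c', hc'⟩ := hgall z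
    have h1 : (C a z).ncard ∣ (C g z).ncard := by
      rw [ha, ncard_C_pow (C_finite hchain hg z) hpe]
      exact ⟨Nat.gcd ((C g z).ncard) (p ^ (e-1)),
        (Nat.div_mul_cancel (Nat.gcd_dvd_left _ _)).symm⟩
    rw [hc'] at h1
    obtain ⟨d, _, hd⟩ := (Nat.dvd_prime_pow hp).mp h1
    exact ⟨d, hd⟩
  have hbz : ∀ z, ∃ d, (C b z).ncard = q ^ d := by
    intro z
    obtain ⟨c', hc'⟩ := hhall z
    have h1 : (C b z).ncard ∣ (C h z).ncard := by
      rw [hb, ncard_C_pow (C_finite hchain hh z) hqf]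
      exact ⟨Nat.gcd ((C h z).ncard) (q ^ (f-1)),
        (Nat.div_mul_cancel (Nat.gcd_dvd_left _ _)).symm⟩
    rw [hc'] at h1
    obtain ⟨d, _, hd⟩ := (Nat.dvd_prime_pow hq).mp h1
    exact ⟨d, hd⟩
  rcases comp_of_chain hchain haG hbG with hcmp | hcmp
  · have hd := card_dvd hchain haG hbG hcmp x (C_finite hchain hbG x)
    rw [hax] at hd
    obtain ⟨d, hd2⟩ := hbz x
    rw [hd2] at hd
    exact (Nat.prime_dvd_prime_iff_eq hp hq).mp (hp.dvd_of_dvd_pow hd)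
  · have hd := card_dvd hchain hbG haG hcmp y (C_finite hchain haG y)
    rw [hby] at hd
    obtain ⟨d, hd2⟩ := haz y
    rw [hd2] at hd
    exact ((Nat.prime_dvd_prime_iff_eq hq hp).mp (hq.dvd_of_dvd_pow hd)).symm

end Group3

end ChainCyclePf

theorem chain_cycle_lengths_prime_power {Ω : Type*}
    (G : Subgroup (Equiv.Perm Ω)) (hchain : IsChain (· ≤ ·) (piSet G)) :
    ∃ p : ℕ, p.Prime ∧ ∀ g ∈ G, ∀ x : Ω,
      ∃ k : ℕ, {y : Ω | ∃ n : ℤ, (g ^ n) x = y}.ncard = p ^ k := by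
  classical
  by_cases htriv : ∀ g ∈ G, ∀ x : Ω, (ChainCyclePf.C g x).ncard = 1
  · exact ⟨2, Nat.prime_two, fun g hg x => ⟨0, by rw [pow_zero]; exact htriv g hg x⟩⟩
  · push_neg at htriv
    obtain ⟨g₀, hg₀, x₀, hn1⟩ := htriv
    obtain ⟨p, hp, hpd⟩ := Nat.exists_prime_and_dvd hn1
    refine ⟨p, hp, fun g hg x => ?_⟩
    show ∃ k, (ChainCyclePf.C g x).ncard = p ^ k
    apply ChainCyclePf.eq_pow_of_unique_prime hp _
      (ChainCyclePf.ncard_C_pos (ChainCyclePf.C_finite hchain hg x)).ne'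
    intro r hr hrd
    exact ChainCyclePf.prime_unique hchain hg hg₀ hr hp hrd hpd
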